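/- arXiv:2508.14685 — 3 statements merged into one kernel-verified Lean document; each statement's English description precedes it below -/
import Mathlib

section
/- For SSA scores on z ∈ ℝ^K with unique maximizer j and z_j − z_i ≥ δ for all i ≠ j, if all coordinates are nonnegative then score(z)_i ≥ 1 / (K · ((1 + b·z_j)/(1 + b·z_i))^n) > 0 for all i; in particular non-maximal coordinates retain weight bounded below by a ratio that decays only polynomially in the gap, unlike softmax where it decays exponentially. -/
open Real Finset

noncomputable def ssaBase (b n x : ℝ) : ℝ :=
  (1 + b * |x|) ^ (Real.sign x * n)

noncomputable def ssaScore {K : ℕ} (b n : ℝ) (z : Fin K → ℝ) (i : Fin K) : ℝ :=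
  ssaBase b n (z i) / ∑ k, ssaBase b n (z k)

lemma ssaBase_nonneg_eq (b n x : ℝ) (hx : 0 ≤ x) :
    ssaBase b n x = (1 + b * x) ^ n := by
  rcases hx.eq_or_lt with h | h
  · simp [ssaBase, ← h, Real.sign_zero]
  · rw [ssaBase, Real.sign_of_pos h, one_mul, abs_of_pos h]

theorem ssaScore_lower_bound {K : ℕ} (b n : ℝ) (hb : 0 < b) (hn : 1 ≤ n)
    (z : Fin K → ℝ) (j : Fin K) (δ : ℝ) (hδ : 0 < δ)
    (hgap : ∀ i, i ≠ j → δ ≤ z j - z i) (hnonneg : ∀ i, 0 ≤ z i) :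
    ∀ i, 0 < 1 / ((K : ℝ) * ((1 + b * z j) / (1 + b * z i)) ^ n) ∧
      1 / ((K : ℝ) * ((1 + b * z j) / (1 + b * z i)) ^ n) ≤ ssaScore b n z i := by
  intro i
  have hK : 0 < (K : ℝ) := by exact_mod_cast Fin.pos j
  have hposj : 0 < 1 + b * z j := by nlinarith [hnonneg j]
  have hposi : 0 < 1 + b * z i := by nlinarith [hnonneg i]
  have hratio : 0 < ((1 + b * z j) / (1 + b * z i)) ^ n :=
    Real.rpow_pos_of_pos (by positivity) n
  have hle : ∀ k, z k ≤ z j := by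
    intro k
    by_cases hk : k = j
    · simp [hk]
    · linarith [hgap k hk]
  have hterm : ∀ k, ssaBase b n (z k) = (1 + b * z k) ^ n := fun k =>
    ssaBase_nonneg_eq b n (z k) (hnonneg k)
  have hSum_le : ∑ k, ssaBase b n (z k) ≤ (K : ℝ) * (1 + b * z j) ^ n := by
    calc ∑ k, ssaBase b n (z k) ≤ ∑ _k : Fin K, (1 + b * z j) ^ n := by
          apply Finset.sum_le_sum
          intro k _
          rw [hterm k]
          exact Real.rpow_le_rpow (by nlinarith [hnonneg k]) (by nlinarith [hle k]) (by linarith)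
      _ = (K : ℝ) * (1 + b * z j) ^ n := by simp [mul_comm]
  have hSum_pos : 0 < ∑ k, ssaBase b n (z k) := by
    apply Finset.sum_pos
    · intro k _
      rw [hterm k]
      exact Real.rpow_pos_of_pos (by nlinarith [hnonneg k]) n
    · exact ⟨j, Finset.mem_univ j⟩
  refine ⟨by positivity, ?_⟩
  have hrw : 1 / ((K : ℝ) * ((1 + b * z j) / (1 + b * z i)) ^ n)
      = (1 + b * z i) ^ n / ((K : ℝ) * (1 + b * z j) ^ n) := by
    rw [Real.div_rpow (le_of_lt hposj) (le_of_lt hposi)]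
    have h1 : (0:ℝ) < (1 + b * z j) ^ n := Real.rpow_pos_of_pos hposj n
    have h2 : (0:ℝ) < (1 + b * z i) ^ n := Real.rpow_pos_of_pos hposi n
    field_simp
  rw [hrw, ssaScore, hterm i]
  apply div_le_div_of_nonneg_left (Real.rpow_pos_of_pos hposi n).le (by positivity) hSum_le
    |>.trans_eq rfl
end

section
/- Fix K ≥ 2 and indices i ≠ j. For any M < 1 there exists z ∈ ℝ^K with z_j − z_i ≥ 4 such that softmax(z)_j ≥ M, while for the same z with all coordinates scaled into [0, C] the SSA score with b = 1, n = 1 satisfies score(z)_j ≤ (1 + z_j)/(K + Σ_k z_k) < 1 uniformly bounded away from 1 when all z_k ≤ C. -/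
open Real Finset

noncomputable def softmax {K : ℕ} (z : Fin K → ℝ) (i : Fin K) : ℝ :=
  Real.exp (z i) / ∑ k, Real.exp (z k)

/-- SSA score with `b = 1`, `n = 1` on nonnegative inputs. -/
noncomputable def ssaScore1 {K : ℕ} (z : Fin K → ℝ) (i : Fin K) : ℝ :=
  (1 + z i) / ∑ k, (1 + z k)

theorem softmax_saturates_ssa_does_not {K : ℕ} (hK : 2 ≤ K) (i j : Fin K) (hij : i ≠ j)
    (M : ℝ) (hM : M < 1) (C : ℝ) (hC : 0 ≤ C) :
    ∃ z : Fin K → ℝ, 4 ≤ z j - z i ∧ M ≤ softmax z j ∧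
      ∀ w : Fin K → ℝ, (∀ k, 0 ≤ w k ∧ w k ≤ C) →
        ssaScore1 w j ≤ (1 + w j) / ((K : ℝ) + ∑ k, w k) ∧
        (1 + w j) / ((K : ℝ) + ∑ k, w k) ≤ (1 + C) / ((K : ℝ) + C) ∧
        (1 + C) / ((K : ℝ) + C) < 1 := by
  have hK1 : (1 : ℝ) < (K : ℝ) := by exact_mod_cast lt_of_lt_of_le one_lt_two hK
  have hKm1 : (0 : ℝ) < (K : ℝ) - 1 := by linarith
  set t : ℝ := max 4 (Real.log (((K : ℝ) - 1) / (1 - M))) with ht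
  have het : ((K : ℝ) - 1) / (1 - M) ≤ Real.exp t := by
    calc ((K : ℝ) - 1) / (1 - M) = Real.exp (Real.log (((K : ℝ) - 1) / (1 - M))) := by
          rw [Real.exp_log (div_pos hKm1 (by linarith))]
      _ ≤ Real.exp t := Real.exp_le_exp.mpr (le_max_right _ _)
  refine ⟨fun k => if k = j then t else 0, ?_, ?_, ?_⟩
  · simp only [if_true, if_neg hij, sub_zero]
    exact le_max_left _ _
  · have hsum : ∑ k, Real.exp (if k = j then t else 0) = Real.exp t + ((K : ℝ) - 1) := by
      simp only [apply_ite Real.exp, Real.exp_zero]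
      have h2 : ∀ x : Fin K, (if x = j then Real.exp t else 1)
          = (if x = j then Real.exp t - 1 else 0) + 1 := by
        intro x; split <;> ring
      simp only [h2, Finset.sum_add_distrib, Finset.sum_ite_eq' Finset.univ j,
        Finset.mem_univ, if_true, Finset.sum_const, Finset.card_univ,
        Fintype.card_fin, nsmul_eq_mul, mul_one]
      ring
    have hpos : 0 < Real.exp t + ((K : ℝ) - 1) := by positivity
    rw [softmax, hsum]
    rw [if_pos rfl, le_div_iff₀ hpos]
    have h1 : ((K : ℝ) - 1) ≤ (1 - M) * Real.exp t := by
      rw [div_le_iff₀ (by linarith : (0:ℝ) < 1 - M)] at het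
      nlinarith [het, Real.exp_pos t]
    nlinarith [Real.exp_pos t]
  · intro w hw
    have hwsum : 0 ≤ ∑ k, w k := Finset.sum_nonneg fun k _ => (hw k).1
    have hwj : w j ≤ ∑ k, w k := Finset.single_le_sum (fun k _ => (hw k).1) (Finset.mem_univ j)
    refine ⟨?_, ?_, ?_⟩
    · rw [ssaScore1]
      have : ∑ k, (1 + w k) = (K : ℝ) + ∑ k, w k := by
        rw [Finset.sum_add_distrib]
        simp [Finset.card_univ]
      rw [this]
    · rw [div_le_div_iff₀ (by linarith) (by linarith)]
      have h1 : w j ≤ C := (hw j).2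
      nlinarith [hwj, (hw j).1]
    · rw [div_lt_one (by linarith)]
      linarith
end

section
/- Uniform attention on a single deviant element: for SSA with b = 1, n = 1 on nonnegative scores z ∈ ℝ₊^K where z_j = M and z_i ≤ 1 for i ≠ j, the score of the maximal element satisfies score(z)_j ≤ (1+M)/(K + M); in particular for fixed M, score(z)_j → 0 as K → ∞, whereas softmax(z)_j ≥ 1/(1 + (K−1)·e^(1−M)) stays close to 1 as long as K·e^(−M) is small. -/
open Real Finset Filter

theorem ssa_dilutes_single_deviant (M : ℝ) :
    (∀ (K : ℕ) (z : Fin K → ℝ) (j : Fin K), (∀ k, 0 ≤ z k) → z j = M →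
      (∀ i, i ≠ j → z i ≤ 1) →
      ssaScore1 z j ≤ (1 + M) / ((K : ℝ) + M) ∧
      1 / (1 + ((K : ℝ) - 1) * Real.exp (1 - M)) ≤ softmax z j) ∧
    Tendsto (fun K : ℕ => (1 + M) / ((K : ℝ) + M)) atTop (nhds 0) := by
  constructor
  · intro K z j hz hj hle
    have hM : 0 ≤ M := hj ▸ hz j
    have hK : (1 : ℝ) ≤ K := by
      have := j.pos
      exact_mod_cast this
    constructor
    · have hsum : (K : ℝ) + M ≤ ∑ k, (1 + z k) := by
        have h1 : (M : ℝ) ≤ ∑ k, z k := by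
          rw [← hj]
          exact Finset.single_le_sum (fun k _ => hz k) (Finset.mem_univ j)
        have : ∑ k, (1 + z k) = (K : ℝ) + ∑ k, z k := by
          rw [Finset.sum_add_distrib]
          simp [mul_comm]
        linarith
      unfold ssaScore1
      rw [hj]
      apply div_le_div_of_nonneg_left (by linarith) (by linarith) hsum
    · have hsum : ∑ k, Real.exp (z k) ≤ Real.exp M + ((K : ℝ) - 1) * Real.exp 1 := by
        rw [← Finset.sum_erase_add _ _ (Finset.mem_univ j), hj]
        have h2 : ∑ k ∈ Finset.univ.erase j, Real.exp (z k)
            ≤ ∑ _k ∈ Finset.univ.erase j, Real.exp 1 := by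
          apply Finset.sum_le_sum
          intro i hi
          exact Real.exp_le_exp.2 (hle i (Finset.ne_of_mem_erase hi))
        have h3 : (∑ _k ∈ Finset.univ.erase j, Real.exp 1) = ((K : ℝ) - 1) * Real.exp 1 := by
          rw [Finset.sum_const, Finset.card_erase_of_mem (Finset.mem_univ j)]
          simp only [Finset.card_univ, Fintype.card_fin, nsmul_eq_mul, Nat.cast_sub j.pos]
          push_cast
          ring
        linarith
      unfold softmax
      rw [hj]
      have hd : 0 < 1 + ((K:ℝ)-1) * Real.exp (1-M) := by
        have := Real.exp_pos (1-M)
        nlinarith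
      rw [div_le_div_iff₀ hd (Finset.sum_pos (fun k _ => Real.exp_pos _) ⟨j, Finset.mem_univ j⟩)]
      have : Real.exp M + ((K:ℝ) - 1) * Real.exp 1 = (1 + ((K:ℝ)-1) * Real.exp (1 - M)) * Real.exp M := by
        rw [Real.exp_sub]
        field_simp
      rw [one_mul]
      calc ∑ k, Real.exp (z k) ≤ Real.exp M + ((K:ℝ) - 1) * Real.exp 1 := hsum
        _ = (1 + ((K:ℝ)-1) * Real.exp (1 - M)) * Real.exp M := this
        _ = Real.exp M * (1 + ((K:ℝ)-1) * Real.exp (1 - M)) := by ring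
  · apply Tendsto.div_atTop tendsto_const_nhds
    apply Filter.tendsto_atTop_add_const_right
    exact tendsto_natCast_atTop_atTop
end
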